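/- (Dunkl-SUSY eigenfunctions for the 3d oscillator.) Let s > 0, α > −1, n ≥ 1 an integer, and define on ℝ \ {0}: ψ±(x) = |s·x|^{α+1/2}·e^{−s²x²/2}·( L_n^{(α)}(s²x²) ∓ (1/√n)·s·x·L_{n−1}^{(α+1)}(s²x²) ). Then for every x ≠ 0, d/dx[ψ±(−x)] + (s²x − (α+1/2)/x)·ψ±(x) = ±2s√n · ψ±(x); that is, ψ± are eigenfunctions on ℝ \ {0} of the Dunkl operator L_v with v(x) = s²x − (α+1/2)/x, with eigenvalues ±2s√n. -/

import Mathlib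

/-- Generalized Laguerre polynomials: `L₀^{(α)} = 1`, `L₁^{(α)}(x) = 1 + α - x`,
`n·L_n^{(α)}(x) = (2n-1+α-x)·L_{n-1}^{(α)}(x) - (n-1+α)·L_{n-2}^{(α)}(x)`. -/
noncomputable def laguerre (α : ℝ) : ℕ → ℝ → ℝ
  | 0 => fun _ => 1
  | 1 => fun x => 1 + α - x
  | (n + 2) => fun x =>
      ((2 * ((n : ℝ) + 2) - 1 + α - x) * laguerre α (n + 1) x
        - (((n : ℝ) + 2) - 1 + α) * laguerre α n x) / ((n : ℝ) + 2)

noncomputable def lagD (α : ℝ) : ℕ → ℝ → ℝ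
  | 0 => fun _ => 0
  | (m + 1) => fun x => -(laguerre (α + 1) m x)

lemma lag_AB (α : ℝ) : ∀ m : ℕ, ∀ x : ℝ,
    (laguerre (α+1) (m+1) x = laguerre α (m+1) x + laguerre (α+1) m x) ∧
    (((m:ℝ)+1) * laguerre α (m+1) x
      = ((m:ℝ)+1+α) * laguerre α m x - x * laguerre (α+1) m x) := by
  intro m
  induction m with
  | zero => intro x; simp [laguerre]; ring
  | succ m ih =>
    intro x
    obtain ⟨hA, hB⟩ := ih x
    have hrec : laguerre α (m+2) x
        = ((2 * ((m : ℝ) + 2) - 1 + α - x) * laguerre α (m + 1) x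
          - (((m : ℝ) + 2) - 1 + α) * laguerre α m x) / ((m : ℝ) + 2) := by
      rfl
    have hrec' : laguerre (α+1) (m+2) x
        = ((2 * ((m : ℝ) + 2) - 1 + (α+1) - x) * laguerre (α+1) (m + 1) x
          - (((m : ℝ) + 2) - 1 + (α+1)) * laguerre (α+1) m x) / ((m : ℝ) + 2) := by
      rfl
    have hm2 : ((m:ℝ) + 2) ≠ 0 := by positivity
    constructor
    · rw [hrec, hrec']
      push_cast
      field_simp
      linear_combination (((m : ℝ) + 2) + α - x) * hA - hB
    · rw [hrec]
      push_cast
      field_simp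
      linear_combination ((m:ℝ)+2) * hB + x * ((m:ℝ)+2) * hA

lemma lag_key (α : ℝ) : ∀ m : ℕ, ∀ u : ℝ,
    (α + 1 - u) * laguerre (α+1) m u + u * lagD (α+1) m u
      = ((m:ℝ)+1) * laguerre α (m+1) u := by
  intro m
  match m with
  | 0 => intro u; simp [laguerre, lagD]; ring
  | (m+1) =>
    intro u
    obtain ⟨hA, -⟩ := lag_AB α m u
    obtain ⟨-, hB1⟩ := lag_AB α (m+1) u
    obtain ⟨-, hB2⟩ := lag_AB (α+1) m u
    simp only [lagD]
    push_cast at hB1 ⊢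
    linear_combination (-1 : ℝ) * hB1 - hB2 + ((m:ℝ)+2+α) * hA

lemma laguerre_hasDerivAt (α : ℝ) : ∀ n : ℕ, ∀ x : ℝ,
    HasDerivAt (laguerre α n) (lagD α n x) x := by
  intro n
  induction n using Nat.twoStepInduction with
  | zero => intro x; simpa [laguerre, lagD] using hasDerivAt_const x (1:ℝ)
  | one =>
    intro x
    have : HasDerivAt (fun y : ℝ => 1 + α - y) (-1) x := by
      simpa using ((hasDerivAt_id x).const_sub (1 + α))
    simpa [laguerre, lagD] using this
  | more n ih0 ih1 =>
    intro x
    have h1 := ih1 x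
    have h0 := ih0 x
    have hx : HasDerivAt (fun y : ℝ =>
        ((2 * ((n : ℝ) + 2) - 1 + α - y) * laguerre α (n + 1) y
          - (((n : ℝ) + 2) - 1 + α) * laguerre α n y) / ((n : ℝ) + 2))
        ((((-1) * laguerre α (n+1) x + (2 * ((n : ℝ) + 2) - 1 + α - x) * lagD α (n+1) x)
          - (((n : ℝ) + 2) - 1 + α) * lagD α n x) / ((n : ℝ) + 2)) x := by
      have hc : HasDerivAt (fun y : ℝ => 2 * ((n : ℝ) + 2) - 1 + α - y) (-1) x := by
        simpa using ((hasDerivAt_id x).const_sub (2 * ((n : ℝ) + 2) - 1 + α))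
      exact ((hc.mul h1).sub (h0.const_mul _)).div_const _
    have heq : laguerre α (n+2) = fun y =>
        ((2 * ((n : ℝ) + 2) - 1 + α - y) * laguerre α (n + 1) y
          - (((n : ℝ) + 2) - 1 + α) * laguerre α n y) / ((n : ℝ) + 2) := rfl
    rw [heq]
    convert hx using 1
    -- show lagD α (n+2) x equals that value
    match n with
    | 0 =>
      simp only [lagD, laguerre] at *
      field_simp
      ring
    | (k+1) =>
      obtain ⟨hA, -⟩ := lag_AB α (k+1) x
      have hrec' : laguerre (α+1) (k+2) x
          = ((2 * ((k : ℝ) + 2) - 1 + (α+1) - x) * laguerre (α+1) (k + 1) x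
            - (((k : ℝ) + 2) - 1 + (α+1)) * laguerre (α+1) k x) / ((k : ℝ) + 2) := rfl
      simp only [lagD] at *
      push_cast at hA hrec' ⊢
      have hk2 : ((k:ℝ)+2) ≠ 0 := by positivity
      have hk3 : ((k:ℝ)+1+2) ≠ 0 := by positivity
      rw [eq_div_iff hk2] at hrec'
      rw [eq_div_iff hk3]
      simp only [show k+1+1 = k+2 from rfl] at hA ⊢
      linear_combination (-1 : ℝ) * hA - hrec'

lemma lagD_succ (α : ℝ) (m : ℕ) (x : ℝ) : lagD α (m+1) x = -(laguerre (α+1) m x) := rfl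



lemma abs_rpow_eq (a b : ℝ) : |a| ^ b = ((a^2 : ℝ)) ^ (b/2) := by
  rw [← sq_abs, ← Real.rpow_natCast |a| 2, ← Real.rpow_mul (abs_nonneg a)]
  congr 1
  ring

lemma eig (s α : ℝ) (hs : 0 < s) (m : ℕ) (ε : ℝ) (hε : ε = 1 ∨ ε = -1)
    (x : ℝ) (hx : x ≠ 0) :
    deriv ((fun y => |s * y| ^ (α + 1 / 2) * Real.exp (-(s ^ 2 * y ^ 2) / 2) *
        (laguerre α (m+1) (s ^ 2 * y ^ 2)
          + ε * ((1 / Real.sqrt ((m:ℝ)+1)) * (s * y) * laguerre (α + 1) m (s ^ 2 * y ^ 2)))) ∘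
        Neg.neg) x
      + (s ^ 2 * x - (α + 1 / 2) / x) * (|s * x| ^ (α + 1 / 2) *
          Real.exp (-(s ^ 2 * x ^ 2) / 2) *
        (laguerre α (m+1) (s ^ 2 * x ^ 2)
          + ε * ((1 / Real.sqrt ((m:ℝ)+1)) * (s * x) * laguerre (α + 1) m (s ^ 2 * x ^ 2))))
    = (-ε * (2 * s * Real.sqrt ((m:ℝ)+1))) * (|s * x| ^ (α + 1 / 2) *
          Real.exp (-(s ^ 2 * x ^ 2) / 2) *
        (laguerre α (m+1) (s ^ 2 * x ^ 2)
          + ε * ((1 / Real.sqrt ((m:ℝ)+1)) * (s * x) * laguerre (α + 1) m (s ^ 2 * x ^ 2)))) := by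
  have hε2 : ε * ε = 1 := by rcases hε with rfl | rfl <;> norm_num
  set r := Real.sqrt ((m:ℝ)+1) with hrdef
  have hrpos : 0 < r := Real.sqrt_pos.mpr (by positivity)
  have hrne : r ≠ 0 := ne_of_gt hrpos
  have hrr : r * r = (m:ℝ)+1 := Real.mul_self_sqrt (by positivity)
  have hrinv : r * (1/r) = 1 := by field_simp
  have hxinv : x * (1/x) = 1 := by field_simp
  have habs : ∀ a : ℝ, |a| ^ (α + 1/2) = ((a^2 : ℝ)) ^ ((α + 1/2)/2) :=
    fun a => abs_rpow_eq a (α + 1/2)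
  simp only [habs]
  -- derivative at t := -x
  have ht : (-x) ≠ 0 := neg_ne_zero.mpr hx
  have hXpos : (0:ℝ) < (s*(-x))^2 := by positivity
  have hsplit : ((s*(-x))^2 : ℝ)^((α+1/2)/2) = ((s*(-x))^2)^((α+1/2)/2 - 1) * (s*(-x))^2 := by
    rw [← Real.rpow_add_one (ne_of_gt hXpos) ((α+1/2)/2 - 1)]
    norm_num
  have hA : HasDerivAt (fun y => ((s*y)^2 : ℝ)^((α+1/2)/2))
      ((α + 1/2)/(-x) * ((s*(-x))^2)^((α+1/2)/2)) (-x) := by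
    have hin : HasDerivAt (fun y : ℝ => (s*y)^2) (2*(s*(-x))*s) (-x) := by
      simpa using (((hasDerivAt_id (-x)).const_mul s).fun_pow 2)
    have hout := Real.hasDerivAt_rpow_const (x := (s*(-x))^2) (p := (α+1/2)/2)
      (Or.inl (ne_of_gt hXpos))
    have hc := hout.comp (-x) hin
    refine hc.congr_deriv ?_
    symm
    rw [hsplit]
    field_simp
  have hE : HasDerivAt (fun y : ℝ => Real.exp (-(s^2*y^2)/2))
      (Real.exp (-(s^2*(-x)^2)/2) * (-(s^2*(-x)))) (-x) := by
    have hin : HasDerivAt (fun y : ℝ => -(s^2*y^2)/2) (-(s^2*(-x))) (-x) := by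
      have h2 : HasDerivAt (fun y : ℝ => y^2) (2*(-x)) (-x) := by
        simpa using hasDerivAt_pow 2 (-x)
      have := ((h2.const_mul (s^2)).neg.div_const 2)
      refine this.congr_deriv ?_
      ring
    exact hin.exp
  have hL : HasDerivAt (fun y : ℝ => laguerre α (m+1) (s^2*y^2))
      (lagD α (m+1) (s^2*(-x)^2) * (s^2*(2*(-x)))) (-x) := by
    have hin : HasDerivAt (fun y : ℝ => s^2*y^2) (s^2*(2*(-x))) (-x) := by
      simpa using ((hasDerivAt_pow 2 (-x)).const_mul (s^2))
    exact (laguerre_hasDerivAt α (m+1) (s^2*(-x)^2)).comp (-x) hin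
  have hM : HasDerivAt (fun y : ℝ => laguerre (α+1) m (s^2*y^2))
      (lagD (α+1) m (s^2*(-x)^2) * (s^2*(2*(-x)))) (-x) := by
    have hin : HasDerivAt (fun y : ℝ => s^2*y^2) (s^2*(2*(-x))) (-x) := by
      simpa using ((hasDerivAt_pow 2 (-x)).const_mul (s^2))
    exact (laguerre_hasDerivAt (α+1) m (s^2*(-x)^2)).comp (-x) hin
  have hlin : HasDerivAt (fun y : ℝ => (1/r) * (s*y)) ((1/r)*s) (-x) := by
    have := ((hasDerivAt_id (-x)).const_mul s).const_mul (1/r)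
    refine this.congr_deriv ?_
    ring
  have hF : HasDerivAt (fun y : ℝ => laguerre α (m+1) (s^2*y^2)
      + ε * ((1/r) * (s*y) * laguerre (α+1) m (s^2*y^2)))
      (lagD α (m+1) (s^2*(-x)^2) * (s^2*(2*(-x)))
        + ε * ((1/r)*s * laguerre (α+1) m (s^2*(-x)^2)
          + (1/r)*(s*(-x)) * (lagD (α+1) m (s^2*(-x)^2) * (s^2*(2*(-x)))))) (-x) :=
    hL.add ((hlin.mul hM).const_mul ε)
  have hgBig : HasDerivAt (fun y => ((s*y)^2 : ℝ)^((α+1/2)/2) * Real.exp (-(s^2*y^2)/2) *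
      (laguerre α (m+1) (s^2*y^2) + ε * ((1/r) * (s*y) * laguerre (α+1) m (s^2*y^2))))
      (((α + 1/2)/(-x) * ((s*(-x))^2)^((α+1/2)/2) * Real.exp (-(s^2*(-x)^2)/2)
          + ((s*(-x))^2)^((α+1/2)/2) * (Real.exp (-(s^2*(-x)^2)/2) * (-(s^2*(-x)))))
        * (laguerre α (m+1) (s^2*(-x)^2) + ε * ((1/r) * (s*(-x)) * laguerre (α+1) m (s^2*(-x)^2)))
        + ((s*(-x))^2)^((α+1/2)/2) * Real.exp (-(s^2*(-x)^2)/2)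
          * (lagD α (m+1) (s^2*(-x)^2) * (s^2*(2*(-x)))
            + ε * ((1/r)*s * laguerre (α+1) m (s^2*(-x)^2)
              + (1/r)*(s*(-x)) * (lagD (α+1) m (s^2*(-x)^2) * (s^2*(2*(-x))))))) (-x) :=
    (hA.mul hE).mul hF
  have hD : HasDerivAt ((fun y => ((s*y)^2 : ℝ)^((α + 1/2)/2) * Real.exp (-(s^2*y^2)/2) *
      (laguerre α (m+1) (s^2*y^2) + ε * ((1/r) * (s*y) * laguerre (α+1) m (s^2*y^2)))) ∘ Neg.neg)
      ((((α + 1/2)/(-x) * ((s*(-x))^2)^((α+1/2)/2) * Real.exp (-(s^2*(-x)^2)/2)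
          + ((s*(-x))^2)^((α+1/2)/2) * (Real.exp (-(s^2*(-x)^2)/2) * (-(s^2*(-x)))))
        * (laguerre α (m+1) (s^2*(-x)^2) + ε * ((1/r) * (s*(-x)) * laguerre (α+1) m (s^2*(-x)^2)))
        + ((s*(-x))^2)^((α+1/2)/2) * Real.exp (-(s^2*(-x)^2)/2)
          * (lagD α (m+1) (s^2*(-x)^2) * (s^2*(2*(-x)))
            + ε * ((1/r)*s * laguerre (α+1) m (s^2*(-x)^2)
              + (1/r)*(s*(-x)) * (lagD (α+1) m (s^2*(-x)^2) * (s^2*(2*(-x))))))) * (-1)) x :=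
    hgBig.comp x (hasDerivAt_neg x)
  rw [hD.deriv]
  simp only [mul_neg, neg_neg, neg_sq, neg_mul, lagD_succ]
  have hkey := lag_key α m (s^2*x^2)
  linear_combination (-2*ε*s/r * (((s*x)^2 : ℝ)^((α+1/2)/2)) * Real.exp (-(s^2*x^2)/2)) * hkey
    + (2*ε*s/r * (((s*x)^2 : ℝ)^((α+1/2)/2)) * Real.exp (-(s^2*x^2)/2) * laguerre α (m+1) (s^2*x^2)) * hrr
    + (-2*s^2*x * (((s*x)^2 : ℝ)^((α+1/2)/2)) * Real.exp (-(s^2*x^2)/2) * laguerre (α+1) m (s^2*x^2)) * hε2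
    + (-2*s^2*x * (((s*x)^2 : ℝ)^((α+1/2)/2)) * Real.exp (-(s^2*x^2)/2) * laguerre (α+1) m (s^2*x^2) * (ε*ε)) * hrinv
    + (-(2*α+1)*s*ε/r * (((s*x)^2 : ℝ)^((α+1/2)/2)) * Real.exp (-(s^2*x^2)/2) * laguerre (α+1) m (s^2*x^2)) * hxinv
    + (4*x*s^2 * (((s*x)^2 : ℝ)^((α+1/2)/2)) * Real.exp (-(s^2*x^2)/2) * laguerre (α+1) m (s^2*x^2) * ε^2) * hrinv
    + (4*x*s^2 * (((s*x)^2 : ℝ)^((α+1/2)/2)) * Real.exp (-(s^2*x^2)/2) * laguerre (α+1) m (s^2*x^2)) * hε2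
    + (-2*s*ε*r * (((s*x)^2 : ℝ)^((α+1/2)/2)) * Real.exp (-(s^2*x^2)/2) * laguerre α (m+1) (s^2*x^2)) * hrinv

/-- Dunkl-SUSY eigenfunctions for the 3d oscillator: on `ℝ \ {0}`, the functions
`ψ±(x) = |sx|^{α+1/2} e^{-s²x²/2}(L_n^{(α)}(s²x²) ∓ (1/√n)·sx·L_{n-1}^{(α+1)}(s²x²))`
satisfy `L_v ψ± = ±2s√n·ψ±` for `v(x) = s²x - (α+1/2)/x`. -/
theorem dunkl_susy_3d_oscillator (s α : ℝ) (hs : 0 < s) (hα : -1 < α)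
    (n : ℕ) (hn : 1 ≤ n) :
    (∀ x : ℝ, x ≠ 0 →
      deriv ((fun y => |s * y| ^ (α + 1 / 2) * Real.exp (-(s ^ 2 * y ^ 2) / 2) *
          (laguerre α n (s ^ 2 * y ^ 2)
            - (1 / Real.sqrt n) * (s * y) * laguerre (α + 1) (n - 1) (s ^ 2 * y ^ 2))) ∘
          Neg.neg) x
        + (s ^ 2 * x - (α + 1 / 2) / x) * (|s * x| ^ (α + 1 / 2) *
            Real.exp (-(s ^ 2 * x ^ 2) / 2) *
          (laguerre α n (s ^ 2 * x ^ 2)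
            - (1 / Real.sqrt n) * (s * x) * laguerre (α + 1) (n - 1) (s ^ 2 * x ^ 2)))
      = 2 * s * Real.sqrt n * (|s * x| ^ (α + 1 / 2) * Real.exp (-(s ^ 2 * x ^ 2) / 2) *
          (laguerre α n (s ^ 2 * x ^ 2)
            - (1 / Real.sqrt n) * (s * x) * laguerre (α + 1) (n - 1) (s ^ 2 * x ^ 2)))) ∧
    (∀ x : ℝ, x ≠ 0 →
      deriv ((fun y => |s * y| ^ (α + 1 / 2) * Real.exp (-(s ^ 2 * y ^ 2) / 2) *
          (laguerre α n (s ^ 2 * y ^ 2)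
            + (1 / Real.sqrt n) * (s * y) * laguerre (α + 1) (n - 1) (s ^ 2 * y ^ 2))) ∘
          Neg.neg) x
        + (s ^ 2 * x - (α + 1 / 2) / x) * (|s * x| ^ (α + 1 / 2) *
            Real.exp (-(s ^ 2 * x ^ 2) / 2) *
          (laguerre α n (s ^ 2 * x ^ 2)
            + (1 / Real.sqrt n) * (s * x) * laguerre (α + 1) (n - 1) (s ^ 2 * x ^ 2)))
      = -(2 * s * Real.sqrt n) * (|s * x| ^ (α + 1 / 2) * Real.exp (-(s ^ 2 * x ^ 2) / 2) *
          (laguerre α n (s ^ 2 * x ^ 2)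
            + (1 / Real.sqrt n) * (s * x) * laguerre (α + 1) (n - 1) (s ^ 2 * x ^ 2)))) := by
  obtain ⟨m, rfl⟩ : ∃ m, n = m + 1 := ⟨n - 1, (Nat.succ_pred_eq_of_pos hn).symm⟩
  constructor
  · intro x hx
    have h := eig s α hs m (-1) (Or.inr rfl) x hx
    simp only [neg_one_mul, ← sub_eq_add_neg, neg_neg, one_mul] at h
    simp only [Nat.add_sub_cancel, Nat.cast_add, Nat.cast_one]
    exact h
  · intro x hx
    have h := eig s α hs m 1 (Or.inl rfl) x hx
    simp only [one_mul, neg_one_mul] at h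
    simp only [Nat.add_sub_cancel, Nat.cast_add, Nat.cast_one]
    exact h
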